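/- Let q be a prime power, m a positive integer, ℓ ≤ q a natural number, n ≤ q^m, and let α_1, ..., α_n be distinct points of F_q^m. Fix a basis a_1, ..., a_m of F_{q^m} over F_q and set β_i = ∑_{j=1}^m a_j α_{ij} ∈ F_{q^m} for 1 ≤ i ≤ n, where α_i = (α_{i1}, ..., α_{im}); the β_i are then distinct. Then for every codeword [φ(α_1), ..., φ(α_n)] of the Reed-Muller code RM_q(ℓ, m, n), its coordinatewise image under the embedding F_q → F_{q^m} is a codeword of the Reed-Solomon code RS_{q^m}(n, ℓ·q^{m−1}) with evaluation points β_1, ..., β_n; that is, there exists f ∈ F_{q^m}[X] with deg f ≤ ℓ·q^{m−1} such that f(β_i) equals the image of φ(α_i) for every i. -/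

import Mathlib

open Polynomial Finset

section aux

variable {F E : Type*} [Field F] [Fintype F] [Field E] [Fintype E] [Algebra F E]

omit [Fintype E] in
/-- Frobenius-power additivity. -/
lemma aux_add_pow {q : ℕ} (hq : Fintype.card F = q) (k : ℕ) (x y : E) :
    (x + y) ^ q ^ k = x ^ q ^ k + y ^ q ^ k := by
  have hp : CharP F (ringChar F) := ringChar.charP F
  have hfact : Fact (ringChar F).Prime := ⟨CharP.char_is_prime F _⟩
  obtain ⟨s, hsp, hs⟩ := FiniteField.card F (ringChar F)
  have hE : CharP E (ringChar F) := charP_of_injective_algebraMap (algebraMap F E).injective _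
  rw [← hq, hs]; simp only [← pow_mul]
  exact add_pow_char_pow x y (ringChar F) (↑s * k)

omit [Fintype E] in
lemma aux_fixed {q : ℕ} (hq : Fintype.card F = q) (k : ℕ) (c : F) :
    (algebraMap F E c) ^ q ^ k = algebraMap F E c := by
  rw [← map_pow, ← hq, FiniteField.pow_card_pow]

omit [Fintype E] in
/-- Elements fixed by `x ↦ x ^ q` lie in the image of `F`. -/
lemma aux_range {q : ℕ} (hq : Fintype.card F = q) {z : E} (hz : z ^ q = z) :
    z ∈ Set.range (algebraMap F E) := by
  classical
  have hq2 : 2 ≤ q := hq ▸ Fintype.one_lt_card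
  by_contra hzr
  set g : E[X] := X ^ q - X with hg
  have hdeg : g.natDegree = q := by
    rw [hg, natDegree_sub_eq_left_of_natDegree_lt, natDegree_X_pow]
    rw [natDegree_X, natDegree_X_pow]; omega
  have hg0 : g ≠ 0 := fun h => by simp [h] at hdeg; omega
  set s : Finset E := Finset.image (algebraMap F E) Finset.univ with hsdef
  have hcard : s.card = q := by
    rw [hsdef, Finset.card_image_of_injective _ (algebraMap F E).injective,
      Finset.card_univ, hq]
  have hsub : insert z s ⊆ g.roots.toFinset := by
    intro u hu
    rw [Multiset.mem_toFinset, mem_roots hg0]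
    have hu' : u ^ q = u := by
      rcases Finset.mem_insert.mp hu with rfl | hu
      · exact hz
      · obtain ⟨c, -, rfl⟩ := Finset.mem_image.mp hu
        have := aux_fixed (E := E) hq 1 c
        simpa using this
    simp [hg, IsRoot, sub_eq_zero, hu']
  have hzs : z ∉ s := fun h => hzr (by
    obtain ⟨c, -, rfl⟩ := Finset.mem_image.mp h; exact ⟨c, rfl⟩)
  have h1 : q + 1 ≤ g.roots.toFinset.card := by
    rw [← hcard, ← Finset.card_insert_of_notMem hzs]
    exact Finset.card_le_card hsub
  have h2 : g.roots.toFinset.card ≤ q := le_trans (Multiset.toFinset_card_le _)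
    (le_trans (Polynomial.card_roots' g) (le_of_eq hdeg))
  omega

end aux

/-- Let `q` be a prime power, `m` a positive integer,
`ℓ ≤ q`, `n ≤ q ^ m`, and let `α 1, ..., α n` be distinct points of `F_q^m`.
Fix a basis `a 1, ..., a m` of `F_{q^m}` (here `E`) over `F_q` (here `F`) and
set `β i = ∑ j, a j * α i j`; the `β i` are then distinct.  Moreover for every
codeword `[φ(α 1), ..., φ(α n)]` of the Reed-Muller code `RM_q(ℓ, m, n)`, its
coordinatewise image under the embedding `F_q → F_{q^m}` is a codeword of the
Reed-Solomon code `RS_{q^m}(n, ℓ q^{m-1})` with evaluation points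
`β 1, ..., β n`: there exists `f ∈ F_{q^m}[X]` with `deg f ≤ ℓ * q ^ (m - 1)`
such that `f (β i)` equals the image of `φ (α i)` for every `i`. -/
theorem stmt_5 {F E : Type*} [Field F] [Fintype F] [Field E] [Fintype E]
    [Algebra F E] (q m ℓ n : ℕ) (hq : Fintype.card F = q) (hm : 0 < m)
    (hℓ : ℓ ≤ q) (hn : n ≤ q ^ m) (hrank : Module.finrank F E = m)
    (α : Fin n → (Fin m → F)) (hα : Function.Injective α)
    (a : Module.Basis (Fin m) F E)
    (β : Fin n → E) (hβ : ∀ i, β i = ∑ j, (a j : E) * algebraMap F E (α i j)) :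
    Function.Injective β ∧
      ∀ φ : MvPolynomial (Fin m) F, φ.totalDegree ≤ ℓ →
        ∃ f : Polynomial E, f.natDegree ≤ ℓ * q ^ (m - 1) ∧
          ∀ i : Fin n, f.eval (β i) = algebraMap F E (MvPolynomial.eval (α i) φ) := by
  classical
  have hq2 : 2 ≤ q := hq ▸ Fintype.one_lt_card
  have hcardE : Fintype.card E = q ^ m := by
    rw [Module.card_fintype a, hq, Fintype.card_fin]
  have hβ' : ∀ i, β i = a.equivFun.symm (α i) := by
    intro i
    rw [hβ i, Module.Basis.equivFun_symm_apply]
    exact Finset.sum_congr rfl fun j _ => by rw [Algebra.smul_def, mul_comm]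
  have hβinj : Function.Injective β := by
    intro i j h
    rw [hβ' i, hβ' j] at h
    exact hα (a.equivFun.symm.injective h)
  have hrepr : ∀ i j, a.repr (β i) j = α i j := by
    intro i j
    rw [hβ' i, ← Module.Basis.equivFun_apply, a.equivFun.apply_symm_apply]
  refine ⟨hβinj, ?_⟩
  -- the "trace-like" map T
  set T : E → E := fun x => ∑ k ∈ range m, x ^ q ^ k with hT
  have haddq : ∀ x y : E, (x + y) ^ q = x ^ q + y ^ q := by
    intro x y
    have := aux_add_pow (E := E) hq 1 x y
    simpa using this
  have hTadd : ∀ x y, T (x + y) = T x + T y := by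
    intro x y
    simp only [hT, ← Finset.sum_add_distrib]
    exact Finset.sum_congr rfl fun k _ => aux_add_pow hq k x y
  have hTsmul : ∀ (c : F) (x : E), T (algebraMap F E c * x) = algebraMap F E c * T x := by
    intro c x
    simp only [hT, Finset.mul_sum, mul_pow]
    exact Finset.sum_congr rfl fun k _ => by rw [aux_fixed hq]
  have hxqm : ∀ x : E, x ^ q ^ m = x := by
    intro x; rw [← hcardE, FiniteField.pow_card]
  -- x ↦ x ^ q as an additive monoid hom
  set ψ : E →+ E := AddMonoidHom.mk' (fun x => x ^ q) haddq with hψ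
  have hTrange : ∀ x, T x ∈ Set.range (algebraMap F E) := by
    intro x
    apply aux_range hq
    have key : (T x) ^ q = ∑ k ∈ range m, x ^ q ^ (k + 1) := by
      have : (T x) ^ q = ψ (∑ k ∈ range m, x ^ q ^ k) := rfl
      rw [this, map_sum]
      refine Finset.sum_congr rfl fun k _ => ?_
      show (x ^ q ^ k) ^ q = x ^ q ^ (k + 1)
      rw [← pow_mul, ← pow_succ]
    rw [key]
    have e1 : ∑ k ∈ range (m + 1), x ^ q ^ k = (∑ k ∈ range m, x ^ q ^ k) + x ^ q ^ m :=
      Finset.sum_range_succ _ _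
    have e2 : ∑ k ∈ range (m + 1), x ^ q ^ k = (∑ k ∈ range m, x ^ q ^ (k + 1)) + x ^ q ^ 0 :=
      Finset.sum_range_succ' _ _
    rw [hxqm x] at e1
    rw [pow_zero, pow_one] at e2
    have e3 := e1.symm.trans e2
    exact add_right_cancel e3.symm
  -- T is nonzero
  have hTne : ∃ x, T x ≠ 0 := by
    by_contra hcon
    push_neg at hcon
    set Q : E[X] := ∑ k ∈ range m, (X : E[X]) ^ q ^ k with hQ
    have hQdeg : Q.natDegree ≤ q ^ (m - 1) := by
      apply Polynomial.natDegree_sum_le_of_forall_le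
      intro k hk
      rw [natDegree_X_pow]
      exact Nat.pow_le_pow_right (by omega) (by simp at hk; omega)
    have hQcoeff : Q.coeff (q ^ (m - 1)) = 1 := by
      rw [hQ, Polynomial.finset_sum_coeff, Finset.sum_eq_single (m - 1)]
      · simp
      · intro k hk hkne
        rw [coeff_X_pow, if_neg]
        intro h
        exact hkne (Nat.pow_right_injective hq2 h.symm)
      · intro h; simp at h; omega
    have hQ0 : Q ≠ 0 := fun h => by simp [h] at hQcoeff
    have hroots : (Finset.univ : Finset E) ⊆ Q.roots.toFinset := by
      intro x _
      rw [Multiset.mem_toFinset, mem_roots hQ0]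
      have : Q.eval x = T x := by simp [hQ, hT, Polynomial.eval_finset_sum]
      rw [IsRoot, this, hcon x]
    have h1 : q ^ m ≤ Q.roots.toFinset.card := by
      rw [← hcardE, ← Finset.card_univ]
      exact Finset.card_le_card hroots
    have h2 : Q.roots.toFinset.card ≤ q ^ (m - 1) :=
      le_trans (Multiset.toFinset_card_le _) (le_trans (Polynomial.card_roots' Q) hQdeg)
    have h3 : q ^ (m - 1) < q ^ m := Nat.pow_lt_pow_right (by omega) (by omega)
    omega
  -- the linear functional t with algebraMap ∘ t = T
  obtain ⟨t, ht⟩ : ∃ t : E → F, ∀ x, algebraMap F E (t x) = T x := by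
    choose t ht using hTrange
    exact ⟨t, ht⟩
  have hinj := (algebraMap F E).injective
  have htadd : ∀ x y, t (x + y) = t x + t y := fun x y =>
    hinj (by rw [ht, map_add, ht, ht, hTadd])
  have htsmul : ∀ (c : F) (x : E), t (c • x) = c • t x := fun c x =>
    hinj (by rw [ht, smul_eq_mul, map_mul, ht, ← hTsmul, ← Algebra.smul_def])
  set tl : E →ₗ[F] F :=
    { toFun := t
      map_add' := htadd
      map_smul' := htsmul } with htl
  have htl_smul : ∀ (c : F) (x : E), tl (algebraMap F E c * x) = c * tl x := by
    intro c x
    rw [← Algebra.smul_def, map_smul, smul_eq_mul]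
  set Φ : E →ₗ[F] Module.Dual F E :=
    { toFun := fun b => tl ∘ₗ LinearMap.mulLeft F b
      map_add' := fun b c => by
        ext x; simp [LinearMap.mulLeft_apply, add_mul]
      map_smul' := fun c b => by
        ext x
        simp only [LinearMap.coe_comp, Function.comp_apply, LinearMap.mulLeft_apply,
          LinearMap.smul_apply, RingHom.id_apply, LinearMap.add_apply, smul_eq_mul]
        rw [Algebra.smul_def, mul_assoc, htl_smul] } with hΦ
  have hΦinj : Function.Injective Φ := by
    rw [← LinearMap.ker_eq_bot, LinearMap.ker_eq_bot']
    intro b hb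
    by_contra hb0
    obtain ⟨x0, hx0⟩ := hTne
    have hval : Φ b (b⁻¹ * x0) = t x0 := by
      show tl (b * (b⁻¹ * x0)) = t x0
      rw [← mul_assoc, mul_inv_cancel₀ hb0, one_mul]; rfl
    rw [hb] at hval
    simp at hval
    exact hx0 (by rw [← ht, ← hval, map_zero])
  have hΦsurj : Function.Surjective Φ := by
    have : FiniteDimensional F E := Module.finite_of_finrank_pos (by omega)
    exact (LinearMap.injective_iff_surjective_of_finrank_eq_finrank
      (Subspace.dual_finrank_eq).symm).mp hΦinj
  have hb : ∀ j : Fin m, ∃ b : E, ∀ x : E, t (b * x) = a.repr x j := by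
    intro j
    obtain ⟨b, hbeq⟩ := hΦsurj (a.coord j)
    refine ⟨b, fun x => ?_⟩
    have := congrFun (congrArg (fun (g : Module.Dual F E) => (g : E → F)) hbeq) x
    simpa [hΦ, htl, LinearMap.mulLeft_apply, Module.Basis.coord_apply] using this
  choose b hbspec using hb
  -- coordinate polynomials
  set P : Fin m → E[X] := fun j => ∑ k ∈ range m, (Polynomial.C (b j) * X) ^ q ^ k with hP
  have hPdeg : ∀ j, (P j).natDegree ≤ q ^ (m - 1) := by
    intro j
    apply Polynomial.natDegree_sum_le_of_forall_le
    intro k hk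
    calc ((C (b j) * X) ^ q ^ k).natDegree = q ^ k * (C (b j) * X).natDegree := by
          rw [Polynomial.natDegree_pow]
      _ ≤ q ^ k * 1 :=
          Nat.mul_le_mul_left _ (le_trans natDegree_mul_le (by simp))
      _ ≤ q ^ (m - 1) := by
          rw [mul_one]; exact Nat.pow_le_pow_right (by omega) (by simp at hk; omega)
  have hPeval : ∀ j (i : Fin n), (P j).eval (β i) = algebraMap F E (α i j) := by
    intro j i
    have : (P j).eval (β i) = T (b j * β i) := by
      simp [hP, hT, Polynomial.eval_finset_sum, mul_pow]
    rw [this, ← ht, hbspec j (β i), hrepr i j]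
  intro φ hφ
  refine ⟨MvPolynomial.aeval P φ, ?_, ?_⟩
  · rw [MvPolynomial.aeval_def, MvPolynomial.eval₂_eq]
    apply Polynomial.natDegree_sum_le_of_forall_le
    intro d hd
    apply le_trans natDegree_mul_le
    have h1 : (algebraMap F E[X] (MvPolynomial.coeff d φ)).natDegree = 0 := by
      have : algebraMap F E[X] (MvPolynomial.coeff d φ)
          = Polynomial.C (algebraMap F E (MvPolynomial.coeff d φ)) := rfl
      rw [this, natDegree_C]
    rw [h1, zero_add]
    apply le_trans (Polynomial.natDegree_prod_le _ _)
    calc ∑ j ∈ d.support, ((P j) ^ d j).natDegree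
        ≤ ∑ j ∈ d.support, d j * q ^ (m - 1) := by
          apply Finset.sum_le_sum
          intro j _
          rw [Polynomial.natDegree_pow]
          exact Nat.mul_le_mul_left _ (hPdeg j)
      _ = (∑ j ∈ d.support, d j) * q ^ (m - 1) := by rw [Finset.sum_mul]
      _ ≤ ℓ * q ^ (m - 1) := by
          apply Nat.mul_le_mul_right
          exact le_trans (MvPolynomial.le_totalDegree hd) hφ
  · intro i
    have h1 : (MvPolynomial.aeval P φ : E[X]).eval (β i)
        = MvPolynomial.eval₂ (algebraMap F E) (fun j => algebraMap F E (α i j)) φ := by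
      rw [MvPolynomial.aeval_def]
      rw [show (MvPolynomial.eval₂ (algebraMap F E[X]) P φ).eval (β i)
          = Polynomial.evalRingHom (β i) (MvPolynomial.eval₂ (algebraMap F E[X]) P φ) from rfl,
        MvPolynomial.eval₂_comp_left]
      congr 1
      · ext c; simp [Polynomial.algebraMap_apply]
      · funext j; exact hPeval j i
    have h2 := MvPolynomial.eval₂_comp_left (algebraMap F E) (RingHom.id F) (α i) φ
    rw [RingHom.comp_id] at h2
    rw [h1]
    exact h2.symm
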